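/- Let f : [0..r−1]^n → ℝ be an r-valued fitness function with a neutral position i ∈ [n]. Consider the r-UMDA without margins (lower border 0 and upper border 1, so no restriction takes place) with parameters λ ≥ μ ≥ 1 optimizing f. Then for each value j ∈ [0..r−1], the sequence of frequencies (p^(t)_{i,j})_{t∈ℕ} is a martingale with respect to its natural filtration. -/

import Mathlib

open MeasureTheory Finset

namespace MVEda

/-- The relative frequency of value `j` at position `i` among the `mu` selected
individuals (`S` is the Boolean indicator of selection within the population `P`). -/
noncomputable def empirical (n r lam mu : ℕ) (P : Fin lam → Fin n → Fin r)
    (S : Fin lam → Bool) (i : Fin n) (j : Fin r) : ℝ :=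
  ((mu : ℝ))⁻¹ * ∑ k : Fin lam, (if S k = true ∧ P k i = j then (1 : ℝ) else 0)

/-- The frequency matrix of the `r`-UMDA **without margins** (lower border `0`, upper
border `1`, so that no restriction takes place) at iteration `t`, as a deterministic
function of the history of previous populations and selections: it is initialized
uniformly (all entries `1/r`), and each update sets the entries to the relative
frequencies among the selected individuals. -/
noncomputable def freqHistNM (n r lam mu : ℕ) :
    (t : ℕ) → (Fin t → (Fin lam → Fin n → Fin r) × (Fin lam → Bool)) →
      Fin n → Fin r → ℝ
  | 0, _, _, _ => ((r : ℝ))⁻¹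
  | t + 1, h, i, j => empirical n r lam mu (h (Fin.last t)).1 (h (Fin.last t)).2 i j

/-- A Boolean vector `S` is a valid selection for the population `P` if it selects
exactly `mu` individuals and every selected individual has fitness at least that of
every unselected individual. -/
def ValidSelection (n r lam mu : ℕ) (f : (Fin n → Fin r) → ℝ)
    (P : Fin lam → Fin n → Fin r) (S : Fin lam → Bool) : Prop :=
  Nat.card {k : Fin lam // S k = true} = mu ∧
    ∀ k k' : Fin lam, S k = true → S k' = false → f (P k') ≤ f (P k)

/-- The event that the history of the first `t` iterations equals `h`. -/
def HistEq (n r lam : ℕ) {Ω : Type*} (pop : ℕ → Ω → Fin lam → Fin n → Fin r)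
    (sel : ℕ → Ω → Fin lam → Bool) (t : ℕ)
    (h : Fin t → (Fin lam → Fin n → Fin r) × (Fin lam → Bool)) : Set Ω :=
  {ω | ∀ s : Fin t, (pop (s : ℕ) ω, sel (s : ℕ) ω) = h s}

/-- The `r`-UMDA **without margins** with population size `lam` and selection size `mu`
optimizing `f`; see the fields for the law of sampling and selection. -/
structure RUMDAnm (Ω : Type*) [MeasurableSpace Ω] (Pr : Measure Ω)
    (n r lam mu : ℕ) (f : (Fin n → Fin r) → ℝ) where
  pop : ℕ → Ω → Fin lam → Fin n → Fin r
  sel : ℕ → Ω → Fin lam → Bool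
  measurable_pop : ∀ t, Measurable (pop t)
  measurable_sel : ∀ t, Measurable (sel t)
  sampling : ∀ (t : ℕ) (h : Fin t → (Fin lam → Fin n → Fin r) × (Fin lam → Bool))
      (P : Fin lam → Fin n → Fin r),
      Pr ({ω | pop t ω = P} ∩ HistEq n r lam pop sel t h)
        = ENNReal.ofReal
            (∏ k : Fin lam, ∏ i : Fin n, freqHistNM n r lam mu t h i (P k i))
          * Pr (HistEq n r lam pop sel t h)
  selection : ∀ (t : ℕ) (h : Fin t → (Fin lam → Fin n → Fin r) × (Fin lam → Bool))
      (P : Fin lam → Fin n → Fin r) (S : Fin lam → Bool),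
      Pr ({ω | sel t ω = S} ∩ {ω | pop t ω = P} ∩ HistEq n r lam pop sel t h)
        = (@ite _ (ValidSelection n r lam mu f P S) (Classical.propDecidable _)
              (((Nat.card {S' : Fin lam → Bool // ValidSelection n r lam mu f P S'} :
                ENNReal))⁻¹) 0)
          * Pr ({ω | pop t ω = P} ∩ HistEq n r lam pop sel t h)

/-- The (random) frequency matrix of the margin-free `r`-UMDA at iteration `t`. -/
noncomputable def RUMDAnm.freq {Ω : Type*} [MeasurableSpace Ω] {Pr : Measure Ω}
    {n r lam mu : ℕ} {f : (Fin n → Fin r) → ℝ} (A : RUMDAnm Ω Pr n r lam mu f)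
    (t : ℕ) (ω : Ω) : Fin n → Fin r → ℝ :=
  freqHistNM n r lam mu t (fun s => (A.pop (s : ℕ) ω, A.sel (s : ℕ) ω))

/-- Position `i` is neutral for `f`: the value at position `i` never influences `f`. -/
def Neutral (n r : ℕ) (f : (Fin n → Fin r) → ℝ) (i : Fin n) : Prop :=
  ∀ x x' : Fin n → Fin r, (∀ i' : Fin n, i' ≠ i → x i' = x' i') → f x = f x'

set_option maxHeartbeats 1000000

lemma sum_pi_prod {ι β : Type*} [Fintype ι] [Fintype β] [DecidableEq ι] (g : ι → β → ℝ)
    (hg : ∀ i, ∑ x, g i x = 1) : ∑ u : ι → β, ∏ i, g i (u i) = 1 := by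
  rw [← Fintype.piFinset_univ, ← Finset.prod_univ_sum]
  simp [hg]

lemma sum_ind_prod {lam r : ℕ} (g : Fin r → ℝ) (hg : ∑ x, g x = 1) (k0 : Fin lam) (j : Fin r) :
    ∑ v : Fin lam → Fin r, (if v k0 = j then (1:ℝ) else 0) * ∏ k, g (v k) = g j := by
  classical
  have key : ∀ v : Fin lam → Fin r, (if v k0 = j then (1:ℝ) else 0) * ∏ k, g (v k)
      = ∏ k, (if k = k0 then (if v k = j then g (v k) else 0) else g (v k)) := by
    intro v
    by_cases h : v k0 = j
    · rw [if_pos h, one_mul]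
      refine Finset.prod_congr rfl fun k _ => ?_
      by_cases hk : k = k0 <;> simp [hk, h]
    · rw [if_neg h, zero_mul]
      refine (Finset.prod_eq_zero (Finset.mem_univ k0) ?_).symm
      simp [h]
  simp_rw [key]
  rw [← Fintype.piFinset_univ,
    ← Finset.prod_univ_sum (fun _ => (univ : Finset (Fin r)))
      (fun k y => if k = k0 then (if y = j then g y else 0) else g y)]
  have : ∀ k : Fin lam, (∑ x : Fin r, if k = k0 then (if x = j then g x else 0) else g x)
      = if k = k0 then g j else 1 := by
    intro k
    by_cases hk : k = k0 <;> simp [hk, hg, Finset.sum_ite_eq']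
  rw [Finset.prod_congr rfl fun k _ => this k]
  simp

lemma sum_sel_eq {lam mu : ℕ} {S : Fin lam → Bool}
    (hS : Nat.card {k : Fin lam // S k = true} = mu) :
    ∑ k : Fin lam, (if S k = true then (1:ℝ) else 0) = mu := by
  classical
  rw [Finset.sum_boole]
  rw [Nat.card_eq_fintype_card, Fintype.card_subtype] at hS
  exact congrArg Nat.cast hS

lemma exists_validSelection {n r lam mu : ℕ} (hml : mu ≤ lam)
    (f : (Fin n → Fin r) → ℝ) (P : Fin lam → Fin n → Fin r) :
    ∃ S, ValidSelection n r lam mu f P S := by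
  classical
  have hne : (Finset.univ.powersetCard mu (α := Fin lam)).Nonempty :=
    Finset.powersetCard_nonempty.2 (by simpa using hml)
  obtain ⟨T, hTmem, hTmax⟩ := Finset.exists_max_image _ (fun T => ∑ k ∈ T, f (P k)) hne
  rw [Finset.mem_powersetCard_univ] at hTmem
  refine ⟨fun k => decide (k ∈ T), ?_, ?_⟩
  · rw [Nat.card_eq_fintype_card, Fintype.card_subtype]
    simpa using hTmem
  · intro k k' hk hk'
    simp only [decide_eq_true_eq] at hk
    simp only [decide_eq_false_iff_not] at hk'
    by_contra hlt
    push_neg at hlt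
    set T' := insert k' (T.erase k) with hT'
    have hk'e : k' ∉ T.erase k := fun hmem => hk' (Finset.mem_of_mem_erase hmem)
    have hcard : T'.card = mu := by
      rw [hT', Finset.card_insert_of_notMem hk'e, Finset.card_erase_of_mem hk, hTmem]
      have : 1 ≤ mu := hTmem ▸ Finset.card_pos.2 ⟨k, hk⟩
      omega
    have hmem' : T' ∈ Finset.univ.powersetCard mu := Finset.mem_powersetCard_univ.mpr hcard
    have hle := hTmax T' hmem'
    rw [hT', Finset.sum_insert hk'e] at hle
    rw [← Finset.add_sum_erase T _ hk] at hle
    have := add_lt_add_right hlt (∑ x ∈ T.erase k, f (P x))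
    linarith


section Key
variable {n r lam mu : ℕ} (f : (Fin n → Fin r) → ℝ) (i : Fin n)

noncomputable def Nval (n r lam mu : ℕ) (f : (Fin n → Fin r) → ℝ)
    (P : Fin lam → Fin n → Fin r) : ℕ :=
  Nat.card {S : Fin lam → Bool // ValidSelection n r lam mu f P S}

noncomputable def Ecomb (n r lam : ℕ) (i : Fin n) :
    ((Fin lam → Fin r) × (Fin lam → {i' : Fin n // i' ≠ i} → Fin r))
      ≃ (Fin lam → Fin n → Fin r) :=
  (Equiv.arrowProdEquivProdArrow _ _ _).symm.trans
    (Equiv.arrowCongr (Equiv.refl _) (Equiv.funSplitAt i (Fin r)).symm)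

lemma Ecomb_apply_i (v : Fin lam → Fin r) (Q : Fin lam → {i' : Fin n // i' ≠ i} → Fin r)
    (k : Fin lam) : Ecomb n r lam i (v, Q) k i = v k := by
  simp [Ecomb, Equiv.funSplitAt, Equiv.piSplitAt, Equiv.arrowProdEquivProdArrow]

lemma Ecomb_apply_ne (v : Fin lam → Fin r) (Q : Fin lam → {i' : Fin n // i' ≠ i} → Fin r)
    (k : Fin lam) (i'' : Fin n) (h : i'' ≠ i) :
    Ecomb n r lam i (v, Q) k i'' = Q k ⟨i'', h⟩ := by
  simp [Ecomb, Equiv.funSplitAt, Equiv.piSplitAt, Equiv.arrowProdEquivProdArrow, h]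

lemma valid_congr {P P' : Fin lam → Fin n → Fin r} (hf : ∀ k, f (P k) = f (P' k))
    (S : Fin lam → Bool) :
    ValidSelection n r lam mu f P S ↔ ValidSelection n r lam mu f P' S := by
  unfold ValidSelection
  constructor <;> rintro ⟨h1, h2⟩ <;> refine ⟨h1, fun k k' hk hk' => ?_⟩
  · rw [← hf k, ← hf k']; exact h2 k k' hk hk'
  · rw [hf k, hf k']; exact h2 k k' hk hk'

lemma Nval_congr {P P' : Fin lam → Fin n → Fin r} (hf : ∀ k, f (P k) = f (P' k)) :
    Nval n r lam mu f P = Nval n r lam mu f P' :=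
  Nat.card_congr (Equiv.subtypeEquivRight fun S => (valid_congr f hf S))

lemma Ecomb_f_congr (hneutral : Neutral n r f i) (v v' : Fin lam → Fin r)
    (Q : Fin lam → {i' : Fin n // i' ≠ i} → Fin r) (k : Fin lam) :
    f (Ecomb n r lam i (v, Q) k) = f (Ecomb n r lam i (v', Q) k) := by
  refine hneutral _ _ fun i'' h => ?_
  rw [Ecomb_apply_ne i v Q k i'' h, Ecomb_apply_ne i v' Q k i'' h]


lemma sum_v_aux {lam r : ℕ} (g : Fin r → ℝ) (hg : ∑ x, g x = 1) (S : Fin lam → Bool) (j : Fin r) :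
    ∑ v : Fin lam → Fin r, (∑ k, if S k = true ∧ v k = j then (1:ℝ) else 0) * ∏ k, g (v k)
      = (∑ k, if S k = true then (1:ℝ) else 0) * g j := by
  classical
  simp_rw [Finset.sum_mul]
  rw [Finset.sum_comm]
  refine Finset.sum_congr rfl fun k _ => ?_
  by_cases hk : S k = true
  · simp only [hk, true_and, if_true, one_mul]
    exact sum_ind_prod g hg k j
  · simp [hk]

open Classical in
lemma key_sum (hneutral : Neutral n r f i) (hmu : 1 ≤ mu) (hml : mu ≤ lam)
    (p : Fin n → Fin r → ℝ) (hp1 : ∀ i', ∑ j', p i' j' = 1) (j : Fin r) :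
    ∑ P : Fin lam → Fin n → Fin r, ∑ S : Fin lam → Bool,
      empirical n r lam mu P S i j *
        ((if ValidSelection n r lam mu f P S then ((Nval n r lam mu f P : ℝ))⁻¹ else 0) *
          ∏ k, ∏ i', p i' (P k i')) = p i j := by
  classical
  have hsplit : ∀ (v : Fin lam → Fin r) (Q : Fin lam → {i' : Fin n // i' ≠ i} → Fin r)
      (k : Fin lam),
      (∏ i', p i' (Ecomb n r lam i (v, Q) k i'))
        = p i (v k) * ∏ i'' : {i' : Fin n // i' ≠ i}, p i'' (Q k i'') := by
    intro v Q k
    rw [← Finset.mul_prod_erase univ _ (mem_univ i), Ecomb_apply_i]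
    congr 1
    rw [Finset.prod_subtype (p := fun x => x ≠ i) (univ.erase i) (fun x => by simp)
      (fun i' => p i' (Ecomb n r lam i (v, Q) k i'))]
    exact Finset.prod_congr rfl fun a _ => by rw [Ecomb_apply_ne i v Q k a.1 a.2]
  rw [← Equiv.sum_comp (Ecomb n r lam i) (fun P => ∑ S : Fin lam → Bool,
      empirical n r lam mu P S i j *
        ((if ValidSelection n r lam mu f P S then ((Nval n r lam mu f P : ℝ))⁻¹ else 0) *
          ∏ k, ∏ i', p i' (P k i')))]
  rw [Fintype.sum_prod_type]
  rw [Finset.sum_comm]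
  have hQ : ∀ Q : Fin lam → {i' : Fin n // i' ≠ i} → Fin r,
      (∑ v : Fin lam → Fin r, ∑ S : Fin lam → Bool,
        empirical n r lam mu (Ecomb n r lam i (v, Q)) S i j *
          ((if ValidSelection n r lam mu f (Ecomb n r lam i (v, Q)) S then
              ((Nval n r lam mu f (Ecomb n r lam i (v, Q)) : ℝ))⁻¹ else 0) *
            ∏ k, ∏ i', p i' (Ecomb n r lam i (v, Q) k i')))
      = (∏ k, ∏ i'' : {i' : Fin n // i' ≠ i}, p i'' (Q k i'')) * p i j := by
    intro Q
    set C := ∏ k, ∏ i'' : {i' : Fin n // i' ≠ i}, p i'' (Q k i'') with hC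
    set P0 := Ecomb n r lam i (fun _ => j, Q) with hP0
    set N0 := Nval n r lam mu f P0 with hN0
    have hVal : ∀ (v : Fin lam → Fin r) (S : Fin lam → Bool),
        ValidSelection n r lam mu f (Ecomb n r lam i (v, Q)) S ↔
          ValidSelection n r lam mu f P0 S := fun v S =>
      valid_congr f (fun k => Ecomb_f_congr f i hneutral v (fun _ => j) Q k) S
    have hNv : ∀ v : Fin lam → Fin r, Nval n r lam mu f (Ecomb n r lam i (v, Q)) = N0 :=
      fun v => Nval_congr f (fun k => Ecomb_f_congr f i hneutral v (fun _ => j) Q k)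
    have hterm : ∀ (v : Fin lam → Fin r) (S : Fin lam → Bool),
        empirical n r lam mu (Ecomb n r lam i (v, Q)) S i j *
          ((if ValidSelection n r lam mu f (Ecomb n r lam i (v, Q)) S then
              ((Nval n r lam mu f (Ecomb n r lam i (v, Q)) : ℝ))⁻¹ else 0) *
            ∏ k, ∏ i', p i' (Ecomb n r lam i (v, Q) k i'))
        = (if ValidSelection n r lam mu f P0 S then ((N0 : ℝ))⁻¹ else 0) * C *
            ((mu:ℝ)⁻¹ *
              ((∑ k, if S k = true ∧ v k = j then (1:ℝ) else 0) * ∏ k, p i (v k))) := by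
      intro v S
      simp only [empirical]
      simp_rw [Ecomb_apply_i, hsplit, Finset.prod_mul_distrib]
      rw [if_congr (hVal v S) rfl rfl, hNv v]
      rw [← hC]
      ring
    simp_rw [hterm]
    rw [Finset.sum_comm]
    have hinner : ∀ S : Fin lam → Bool,
        (∑ v : Fin lam → Fin r,
          (if ValidSelection n r lam mu f P0 S then ((N0 : ℝ))⁻¹ else 0) * C *
            ((mu:ℝ)⁻¹ *
              ((∑ k, if S k = true ∧ v k = j then (1:ℝ) else 0) * ∏ k, p i (v k))))
        = (if ValidSelection n r lam mu f P0 S then ((N0 : ℝ))⁻¹ else 0) * C * p i j := by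
      intro S
      rw [← Finset.mul_sum]
      by_cases hS : ValidSelection n r lam mu f P0 S
      · rw [← Finset.mul_sum, sum_v_aux (p i) (hp1 i) S j, sum_sel_eq hS.1]
        have hmune : (mu : ℝ) ≠ 0 := Nat.cast_ne_zero.mpr (by omega)
        field_simp
      · simp [hS]
    refine Eq.trans (Finset.sum_congr rfl fun S _ => hinner S) ?_
    rw [← Finset.sum_mul, ← Finset.sum_mul]
    have hNpos : 0 < N0 := by
      obtain ⟨S0, hS0⟩ := exists_validSelection hml f P0
      haveI : Nonempty {S : Fin lam → Bool // ValidSelection n r lam mu f P0 S} := ⟨⟨S0, hS0⟩⟩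
      rw [hN0, Nval]
      exact Nat.card_pos
    have hNsum : (∑ S : Fin lam → Bool,
        if ValidSelection n r lam mu f P0 S then ((N0 : ℝ))⁻¹ else 0) = 1 := by
      rw [Finset.sum_ite, Finset.sum_const, Finset.sum_const_zero, add_zero, nsmul_eq_mul]
      have hNcard : (univ.filter (fun S => ValidSelection n r lam mu f P0 S)).card = N0 := by
        rw [hN0, Nval, Nat.card_eq_fintype_card, Fintype.card_subtype]
      rw [hNcard]
      exact mul_inv_cancel₀ (Nat.cast_ne_zero.mpr hNpos.ne')
    rw [hNsum, one_mul]
  refine Eq.trans (Finset.sum_congr rfl fun Q _ => hQ Q) ?_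
  rw [← Finset.sum_mul]
  have hinner2 : ∀ _k : Fin lam, ∑ u : {i' : Fin n // i' ≠ i} → Fin r,
      ∏ i'' : {i' : Fin n // i' ≠ i}, p i'' (u i'') = 1 :=
    fun _ => sum_pi_prod _ fun i'' => hp1 i''
  have hCsum : (∑ Q : Fin lam → {i' : Fin n // i' ≠ i} → Fin r,
      ∏ k, ∏ i'' : {i' : Fin n // i' ≠ i}, p i'' (Q k i'')) = 1 :=
    sum_pi_prod (ι := Fin lam) (β := {i' : Fin n // i' ≠ i} → Fin r)
      (fun _ u => ∏ i'' : {i' : Fin n // i' ≠ i}, p i'' (u i'')) hinner2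
  rw [hCsum, one_mul]

end Key

section Aux

open MeasureTheory

/-! ### Bounds -/

lemma empirical_nonneg {n r lam mu : ℕ} (P : Fin lam → Fin n → Fin r) (S : Fin lam → Bool)
    (i : Fin n) (j : Fin r) : 0 ≤ empirical n r lam mu P S i j := by
  unfold empirical
  refine mul_nonneg (by positivity) (Finset.sum_nonneg fun k _ => ?_)
  split <;> norm_num

lemma empirical_le {n r lam mu : ℕ} (P : Fin lam → Fin n → Fin r) (S : Fin lam → Bool)
    (i : Fin n) (j : Fin r) : empirical n r lam mu P S i j ≤ (mu : ℝ)⁻¹ * lam := by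
  unfold empirical
  refine mul_le_mul_of_nonneg_left ?_ (by positivity)
  calc (∑ k : Fin lam, if S k = true ∧ P k i = j then (1:ℝ) else 0)
      ≤ ∑ _k : Fin lam, (1:ℝ) := Finset.sum_le_sum fun k _ => by split <;> norm_num
    _ = lam := by simp

lemma freqHistNM_nonneg {n r lam mu : ℕ} (t : ℕ)
    (h : Fin t → (Fin lam → Fin n → Fin r) × (Fin lam → Bool)) (i : Fin n) (j : Fin r) :
    0 ≤ freqHistNM n r lam mu t h i j := by
  cases t with
  | zero => unfold freqHistNM; positivity
  | succ u => exact empirical_nonneg _ _ _ _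

lemma freqHistNM_le {n r lam mu : ℕ} (t : ℕ)
    (h : Fin t → (Fin lam → Fin n → Fin r) × (Fin lam → Bool)) (i : Fin n) (j : Fin r) :
    freqHistNM n r lam mu t h i j ≤ (r : ℝ)⁻¹ + (mu : ℝ)⁻¹ * lam := by
  cases t with
  | zero =>
      unfold freqHistNM
      have : (0:ℝ) ≤ (mu : ℝ)⁻¹ * lam := by positivity
      linarith
  | succ u =>
      have h1 := empirical_le (n := n) (r := r) (mu := mu) (h (Fin.last u)).1 (h (Fin.last u)).2 i j
      have : (0:ℝ) ≤ (r:ℝ)⁻¹ := by positivity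
      exact le_trans h1 (by linarith)

/-! ### Row sums of consistent frequency matrices -/

lemma sum_empirical {n r lam mu : ℕ} (hmu : 1 ≤ mu) {P : Fin lam → Fin n → Fin r}
    {S : Fin lam → Bool} (hcard : Nat.card {k : Fin lam // S k = true} = mu) (i : Fin n) :
    ∑ j : Fin r, empirical n r lam mu P S i j = 1 := by
  classical
  unfold empirical
  rw [← Finset.mul_sum, Finset.sum_comm]
  have hin : ∀ k : Fin lam, (∑ j : Fin r, if S k = true ∧ P k i = j then (1:ℝ) else 0)
      = if S k = true then (1:ℝ) else 0 := by
    intro k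
    by_cases hk : S k = true
    · simp [hk]
    · simp [hk]
  rw [Finset.sum_congr rfl fun k _ => hin k, sum_sel_eq hcard]
  rw [inv_mul_cancel₀ (Nat.cast_ne_zero.mpr (by omega))]

end Aux


section MeasAux

open MeasureTheory

variable {Ω : Type*} [MeasurableSpace Ω] {Pr : Measure Ω} [IsProbabilityMeasure Pr]

lemma setIntegral_comp_fintype {β : Type*} [Fintype β] [MeasurableSpace β]
    [MeasurableSingletonClass β] {Y : Ω → β} (hY : Measurable Y) (g : β → ℝ)
    {E : Set Ω} (hE : MeasurableSet E) :
    ∫ ω in E, g (Y ω) ∂Pr = ∑ b : β, g b * (Pr (Y ⁻¹' {b} ∩ E)).toReal := by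
  classical
  have hmeas : ∀ b : β, MeasurableSet (Y ⁻¹' {b} ∩ E) :=
    fun b => (hY (measurableSet_singleton b)).inter hE
  have hint : Integrable (fun ω => g (Y ω)) Pr := by
    refine ⟨((measurable_of_countable g).comp hY).aestronglyMeasurable, ?_⟩
    refine HasFiniteIntegral.of_bounded (C := ∑ b : β, |g b|) (Filter.Eventually.of_forall
      fun ω => ?_)
    rw [Real.norm_eq_abs]
    exact Finset.single_le_sum (f := fun b => |g b|) (fun b _ => abs_nonneg _)
      (Finset.mem_univ (Y ω))
  have hdecomp : E = ⋃ b ∈ (Finset.univ : Finset β), (Y ⁻¹' {b} ∩ E) := by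
    ext ω; simp
  calc ∫ ω in E, g (Y ω) ∂Pr
      = ∫ ω in ⋃ b ∈ (Finset.univ : Finset β), (Y ⁻¹' {b} ∩ E), g (Y ω) ∂Pr := by
        rw [← hdecomp]
    _ = ∑ b : β, ∫ ω in Y ⁻¹' {b} ∩ E, g (Y ω) ∂Pr := by
        refine integral_biUnion_finset Finset.univ (fun b _ => hmeas b) ?_
          (fun b _ => hint.integrableOn)
        intro b _ b' _ hbb'
        refine Set.disjoint_left.mpr fun ω hω hω' => hbb' ?_
        have h1 : Y ω = b := hω.1
        have h2 : Y ω = b' := hω'.1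
        rw [← h1, h2]
    _ = ∑ b : β, g b * (Pr (Y ⁻¹' {b} ∩ E)).toReal := by
        refine Finset.sum_congr rfl fun b _ => ?_
        rw [setIntegral_congr_fun (hmeas b) (fun ω hω => by rw [show Y ω = b from hω.1]),
          setIntegral_const, smul_eq_mul, mul_comm]
        rfl

end MeasAux

section MeasMain

open MeasureTheory

variable {Ω : Type*} [MeasurableSpace Ω] {Pr : Measure Ω} {n r lam mu : ℕ}
  {f : (Fin n → Fin r) → ℝ}

/-- The history map at time `t`. -/
def RUMDAnm.histFun (A : RUMDAnm Ω Pr n r lam mu f) (t : ℕ) (ω : Ω) :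
    Fin t → (Fin lam → Fin n → Fin r) × (Fin lam → Bool) :=
  fun s => (A.pop (s : ℕ) ω, A.sel (s : ℕ) ω)

lemma RUMDAnm.measurable_histFun (A : RUMDAnm Ω Pr n r lam mu f) (t : ℕ) :
    Measurable (A.histFun t) :=
  measurable_pi_lambda _ fun s => (A.measurable_pop (s : ℕ)).prodMk (A.measurable_sel (s : ℕ))

/-- The σ-algebra generated by the history up to time `t`. -/
def RUMDAnm.histSA (A : RUMDAnm Ω Pr n r lam mu f) (t : ℕ) : MeasurableSpace Ω :=
  MeasurableSpace.comap (A.histFun t) inferInstance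

lemma RUMDAnm.histSA_le (A : RUMDAnm Ω Pr n r lam mu f) (t : ℕ) :
    A.histSA t ≤ ‹MeasurableSpace Ω› :=
  (A.measurable_histFun t).comap_le

lemma RUMDAnm.histEq_eq (A : RUMDAnm Ω Pr n r lam mu f) (t : ℕ)
    (h : Fin t → (Fin lam → Fin n → Fin r) × (Fin lam → Bool)) :
    HistEq n r lam A.pop A.sel t h = A.histFun t ⁻¹' {h} := by
  ext ω
  simp only [HistEq, Set.mem_setOf_eq, Set.mem_preimage, Set.mem_singleton_iff, funext_iff]
  rfl

lemma RUMDAnm.freq_eq (A : RUMDAnm Ω Pr n r lam mu f) (t : ℕ) (ω : Ω) :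
    A.freq t ω = freqHistNM n r lam mu t (A.histFun t ω) := rfl

lemma RUMDAnm.measurableSet_histEq (A : RUMDAnm Ω Pr n r lam mu f) (t : ℕ)
    (h : Fin t → (Fin lam → Fin n → Fin r) × (Fin lam → Bool)) :
    MeasurableSet (HistEq n r lam A.pop A.sel t h) := by
  rw [A.histEq_eq t h]
  exact A.measurable_histFun t (measurableSet_singleton h)

lemma RUMDAnm.sum_freq_row (A : RUMDAnm Ω Pr n r lam mu f) (hr : 2 ≤ r) (hmu : 1 ≤ mu)
    (t : ℕ) (h : Fin t → (Fin lam → Fin n → Fin r) × (Fin lam → Bool))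
    (hpos : Pr (HistEq n r lam A.pop A.sel t h) ≠ 0) (i' : Fin n) :
    ∑ j : Fin r, freqHistNM n r lam mu t h i' j = 1 := by
  classical
  cases t with
  | zero =>
      simp only [freqHistNM]
      rw [Finset.sum_const, Finset.card_univ, Fintype.card_fin, nsmul_eq_mul,
        mul_inv_cancel₀ (Nat.cast_ne_zero.mpr (by omega))]
  | succ u =>
      have hsub : HistEq n r lam A.pop A.sel (u+1) h ⊆
          {ω | A.sel u ω = (h (Fin.last u)).2} ∩ {ω | A.pop u ω = (h (Fin.last u)).1} ∩
            HistEq n r lam A.pop A.sel u (fun s => h s.castSucc) := by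
        intro ω hω
        have hlast := hω (Fin.last u)
        exact ⟨⟨congrArg Prod.snd hlast, congrArg Prod.fst hlast⟩, fun s => hω s.castSucc⟩
      have hpos2 : Pr ({ω | A.sel u ω = (h (Fin.last u)).2} ∩
          {ω | A.pop u ω = (h (Fin.last u)).1} ∩
          HistEq n r lam A.pop A.sel u (fun s => h s.castSucc)) ≠ 0 :=
        fun h0 => hpos (measure_mono_null hsub h0)
      rw [A.selection u (fun s => h s.castSucc) (h (Fin.last u)).1 (h (Fin.last u)).2] at hpos2
      have hvalid : ValidSelection n r lam mu f (h (Fin.last u)).1 (h (Fin.last u)).2 := by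
        by_contra hne
        rw [if_neg hne, zero_mul] at hpos2
        exact hpos2 rfl
      simp only [freqHistNM]
      exact sum_empirical hmu hvalid.1 i'

lemma RUMDAnm.atom (A : RUMDAnm Ω Pr n r lam mu f) [IsProbabilityMeasure Pr]
    (i : Fin n) (j : Fin r)
    (hneutral : Neutral n r f i) (hr : 2 ≤ r) (hmu : 1 ≤ mu) (hml : mu ≤ lam) (t : ℕ)
    (h : Fin t → (Fin lam → Fin n → Fin r) × (Fin lam → Bool)) :
    ∫ ω in HistEq n r lam A.pop A.sel t h, A.freq (t+1) ω i j ∂Pr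
      = freqHistNM n r lam mu t h i j * (Pr (HistEq n r lam A.pop A.sel t h)).toReal := by
  classical
  set H := HistEq n r lam A.pop A.sel t h with hH
  have hHmeas : MeasurableSet H := A.measurableSet_histEq t h
  by_cases hpos : Pr H = 0
  · rw [hpos, ENNReal.toReal_zero, mul_zero,
      Measure.restrict_eq_zero.mpr hpos, integral_zero_measure]
  · have hY : Measurable (fun ω => (A.pop t ω, A.sel t ω)) :=
      (A.measurable_pop t).prodMk (A.measurable_sel t)
    have hpart := setIntegral_comp_fintype (Pr := Pr) hY
      (fun PS : (Fin lam → Fin n → Fin r) × (Fin lam → Bool) =>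
        empirical n r lam mu PS.1 PS.2 i j) hHmeas
    have hfib : ∀ (P : Fin lam → Fin n → Fin r) (S : Fin lam → Bool),
        (fun ω => (A.pop t ω, A.sel t ω)) ⁻¹' {(P, S)} ∩ H
          = {ω | A.sel t ω = S} ∩ {ω | A.pop t ω = P} ∩ H := by
      intro P S
      ext ω
      simp only [Set.mem_inter_iff, Set.mem_preimage, Set.mem_singleton_iff, Prod.mk.injEq,
        Set.mem_setOf_eq]
      tauto
    have hq0 : ∀ P : Fin lam → Fin n → Fin r,
        0 ≤ ∏ k, ∏ i', freqHistNM n r lam mu t h i' (P k i') :=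
      fun P => Finset.prod_nonneg fun k _ => Finset.prod_nonneg fun i' _ =>
        freqHistNM_nonneg t h i' (P k i')
    have hPr : ∀ (P : Fin lam → Fin n → Fin r) (S : Fin lam → Bool),
        (Pr ({ω | A.sel t ω = S} ∩ {ω | A.pop t ω = P} ∩ H)).toReal
          = ((if ValidSelection n r lam mu f P S then ((Nval n r lam mu f P : ℝ))⁻¹ else 0) *
              ∏ k, ∏ i', freqHistNM n r lam mu t h i' (P k i')) * (Pr H).toReal := by
      intro P S
      rw [hH, A.selection t h P S, A.sampling t h P]
      by_cases hv : ValidSelection n r lam mu f P S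
      · rw [if_pos hv, if_pos hv, ENNReal.toReal_mul, ENNReal.toReal_mul,
          ENNReal.toReal_inv, ENNReal.toReal_natCast, ENNReal.toReal_ofReal (hq0 P),
          ← mul_assoc]
        rfl
      · rw [if_neg hv, if_neg hv, zero_mul, zero_mul, zero_mul, ENNReal.toReal_zero]
  -- now combine
    calc ∫ ω in H, A.freq (t+1) ω i j ∂Pr
        = ∑ PS : (Fin lam → Fin n → Fin r) × (Fin lam → Bool),
            empirical n r lam mu PS.1 PS.2 i j *
              (Pr ((fun ω => (A.pop t ω, A.sel t ω)) ⁻¹' {PS} ∩ H)).toReal := hpart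
      _ = ∑ PS : (Fin lam → Fin n → Fin r) × (Fin lam → Bool),
            (empirical n r lam mu PS.1 PS.2 i j *
              ((if ValidSelection n r lam mu f PS.1 PS.2 then
                  ((Nval n r lam mu f PS.1 : ℝ))⁻¹ else 0) *
                ∏ k, ∏ i', freqHistNM n r lam mu t h i' (PS.1 k i'))) * (Pr H).toReal := by
          refine Finset.sum_congr rfl fun PS _ => ?_
          rw [show ({PS} : Set _) = {(PS.1, PS.2)} from by rw [Prod.mk.eta], hfib PS.1 PS.2,
            hPr PS.1 PS.2, ← mul_assoc]
      _ = (∑ P : Fin lam → Fin n → Fin r, ∑ S : Fin lam → Bool,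
            empirical n r lam mu P S i j *
              ((if ValidSelection n r lam mu f P S then ((Nval n r lam mu f P : ℝ))⁻¹ else 0) *
                ∏ k, ∏ i', freqHistNM n r lam mu t h i' (P k i'))) * (Pr H).toReal := by
          rw [← Finset.sum_mul, Fintype.sum_prod_type]
      _ = freqHistNM n r lam mu t h i j * (Pr H).toReal := by
          rw [key_sum f i hneutral hmu hml (freqHistNM n r lam mu t h)
            (A.sum_freq_row hr hmu t h (hH ▸ hpos)) j]

end MeasMain


end MVEda

open MVEda

/-- Lemma `neutralFrequencyIsMartingale`: for the `r`-UMDA without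
margins optimizing an `r`-valued fitness function `f` with neutral position `i`, each
frequency `(p^(t)_{i,j})_{t ∈ ℕ}` is a martingale with respect to its natural
filtration. -/
theorem neutral_frequency_is_martingale
    {Ω : Type*} [MeasurableSpace Ω] (Pr : Measure Ω) [IsProbabilityMeasure Pr]
    (n r lam mu : ℕ) (hn : 1 ≤ n) (hr : 2 ≤ r) (hmu : 1 ≤ mu) (hml : mu ≤ lam)
    (f : (Fin n → Fin r) → ℝ) (i : Fin n) (hneutral : Neutral n r f i)
    (A : RUMDAnm Ω Pr n r lam mu f) (j : Fin r)
    (hmeas : ∀ t : ℕ, StronglyMeasurable (fun ω => A.freq t ω i j)) :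
    Martingale (fun t ω => A.freq t ω i j)
      (Filtration.natural (fun t ω => A.freq t ω i j) hmeas) Pr := by
  classical
  have hint : ∀ t, Integrable (fun ω => A.freq t ω i j) Pr := by
    intro t
    refine ⟨(hmeas t).aestronglyMeasurable, HasFiniteIntegral.of_bounded
      (C := (r:ℝ)⁻¹ + (mu:ℝ)⁻¹ * lam) (Filter.Eventually.of_forall fun ω => ?_)⟩
    rw [Real.norm_eq_abs, A.freq_eq t ω,
      abs_of_nonneg (freqHistNM_nonneg t (A.histFun t ω) i j)]
    exact freqHistNM_le t (A.histFun t ω) i j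
  refine martingale_nat (Filtration.stronglyAdapted_natural hmeas) hint fun t => ?_
  have hGle : A.histSA t ≤ ‹MeasurableSpace Ω› := A.histSA_le t
  haveI hfin : IsFiniteMeasure (Pr.trim hGle) := ⟨by
    rw [trim_measurableSet_eq hGle (@MeasurableSet.univ Ω (A.histSA t))]
    exact measure_lt_top Pr _⟩
  have hXG : Measurable[A.histSA t] (fun ω => A.freq t ω i j) := by
    have hc : (fun ω => A.freq t ω i j)
        = (fun hh => freqHistNM n r lam mu t hh i j) ∘ A.histFun t := rfl
    rw [hc]
    exact Measurable.comp (measurable_of_countable _)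
      (Measurable.of_comap_le (le_of_eq rfl))
  have hstep : (fun ω => A.freq t ω i j)
      =ᵐ[Pr] Pr[fun ω => A.freq (t+1) ω i j | A.histSA t] := by
    refine ae_eq_condExp_of_forall_setIntegral_eq hGle (hint (t+1))
      (fun s _ _ => (hint t).integrableOn) ?_ ?_
    · rintro s ⟨B, -, rfl⟩ -
      have hBdec : A.histFun t ⁻¹' B
          = ⋃ hh ∈ (Set.toFinite B).toFinset, A.histFun t ⁻¹' {hh} := by
        ext ω
        simp only [Set.mem_preimage, Set.mem_iUnion, Set.Finite.mem_toFinset,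
          Set.mem_singleton_iff, exists_prop]
        exact ⟨fun hb => ⟨A.histFun t ω, hb, rfl⟩, fun ⟨hh, hb, he⟩ => he ▸ hb⟩
      have hmeasfib : ∀ hh, MeasurableSet (A.histFun t ⁻¹' ({hh} : Set _)) :=
        fun hh => A.measurable_histFun t (measurableSet_singleton hh)
      have hdisj : Set.Pairwise ((Set.toFinite B).toFinset : Set _)
          (Function.onFun Disjoint fun hh => A.histFun t ⁻¹' ({hh} : Set _)) := by
        intro a _ b _ hab
        refine Set.disjoint_left.mpr fun ω hω hω' => hab ?_
        have ha' : A.histFun t ω = a := hω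
        have hb' : A.histFun t ω = b := hω'
        rw [← ha', hb']
      rw [hBdec, integral_biUnion_finset _ (fun hh _ => hmeasfib hh) hdisj
          (fun hh _ => (hint t).integrableOn),
        integral_biUnion_finset _ (fun hh _ => hmeasfib hh) hdisj
          (fun hh _ => (hint (t+1)).integrableOn)]
      refine Finset.sum_congr rfl fun hh _ => ?_
      have hatom := A.atom i j hneutral hr hmu hml t hh
      rw [A.histEq_eq] at hatom
      rw [hatom]
      rw [setIntegral_congr_fun (hmeasfib hh)
          (fun ω hω => show A.freq t ω i j = freqHistNM n r lam mu t hh i j from by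
            rw [A.freq_eq, show A.histFun t ω = hh from hω]),
        setIntegral_const, smul_eq_mul, mul_comm]
      rfl
    · exact StronglyMeasurable.aestronglyMeasurable (Measurable.stronglyMeasurable hXG)
  have hnat_le : (Filtration.natural (fun t ω => A.freq t ω i j) hmeas) t ≤ A.histSA t := by
    refine iSup₂_le fun s hs => ?_
    have hcomp : (fun ω => A.freq s ω i j)
        = (fun hh : Fin t → (Fin lam → Fin n → Fin r) × (Fin lam → Bool) =>
            freqHistNM n r lam mu s (fun u => hh (Fin.castLE hs u)) i j) ∘ A.histFun t := rfl
    show MeasurableSpace.comap (fun ω => A.freq s ω i j) Real.measurableSpace ≤ A.histSA t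
    rw [hcomp, ← MeasurableSpace.comap_comp]
    exact MeasurableSpace.comap_mono fun s' _ => (Set.to_countable s').measurableSet
  have hFle := (Filtration.natural (fun t ω => A.freq t ω i j) hmeas).le t
  haveI hfin2 : IsFiniteMeasure (Pr.trim hFle) := ⟨by
    rw [trim_measurableSet_eq hFle
      (@MeasurableSet.univ Ω ((Filtration.natural (fun t ω => A.freq t ω i j) hmeas) t))]
    exact measure_lt_top Pr _⟩
  have h1 : Pr[fun ω => A.freq t ω i j |
      (Filtration.natural (fun t ω => A.freq t ω i j) hmeas) t] = fun ω => A.freq t ω i j :=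
    condExp_of_stronglyMeasurable hFle (Filtration.stronglyAdapted_natural hmeas t) (hint t)
  refine Filter.EventuallyEq.trans ?_ (condExp_condExp_of_le hnat_le hGle)
  refine Filter.EventuallyEq.trans ?_ (condExp_congr_ae hstep)
  exact h1.symm ▸ Filter.EventuallyEq.rfl
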